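/- arXiv:2208.04208 — 2 statements merged into one kernel-verified Lean document; each statement's English description precedes it below -/
import Mathlib

section
/- Let g : [-1/2,1/2]^2 → ℝ be a bivariate polynomial of degree at most n in each variable, not identically zero, whose zero set is a finite union of smooth rectifiable curves. Then the total length (1-dimensional Hausdorff measure) of the zero set of g in [-1/2,1/2]^2 is at most C·n for some absolute constant C > 0. -/
open MeasureTheory Set

lemma factor_lemma {γ : ℝ → ℝ × ℝ} {v : ℝ → ℝ} {s : Set ℝ} {L : NNReal}
    (h : ∀ t ∈ s, ∀ u ∈ s, dist (γ t) (γ u) ≤ L * dist (v t) (v u)) :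
    μH[1] (γ '' s) ≤ L * μH[1] (v '' s) := by
  rcases s.eq_empty_or_nonempty with rfl | ⟨t₀, ht₀⟩
  · simp
  classical
  set w : ℝ → ℝ × ℝ := fun x => if hx : ∃ t ∈ s, v t = x then γ hx.choose else γ t₀ with hw
  have hws : ∀ t ∈ s, w (v t) = γ t := by
    intro t ht
    have hx : ∃ u ∈ s, v u = v t := ⟨t, ht, rfl⟩
    have h2 : w (v t) = γ hx.choose := dif_pos hx
    obtain ⟨hc1, hc2⟩ := hx.choose_spec
    have h3 := h _ hc1 t ht
    rw [hc2] at h3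
    simp only [dist_self, mul_zero] at h3
    rw [h2, dist_le_zero.mp h3]
  have himg : γ '' s = w '' (v '' s) := by
    ext z
    constructor
    · rintro ⟨t, ht, rfl⟩
      exact ⟨v t, ⟨t, ht, rfl⟩, hws t ht⟩
    · rintro ⟨x, ⟨t, ht, rfl⟩, rfl⟩
      exact ⟨t, ht, (hws t ht).symm⟩
  have hlip : LipschitzOnWith L w (v '' s) := by
    rw [lipschitzOnWith_iff_dist_le_mul]
    rintro x ⟨t, ht, rfl⟩ y ⟨u, hu, rfl⟩
    rw [hws t ht, hws u hu]
    exact h t ht u hu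
  calc μH[1] (γ '' s) = μH[1] (w '' (v '' s)) := by rw [himg]
    _ ≤ (L : ENNReal) ^ (1 : ℝ) * μH[1] (v '' s) :=
        hlip.hausdorffMeasure_image_le (by norm_num)
    _ = L * μH[1] (v '' s) := by rw [ENNReal.rpow_one]

lemma null_lemma {γ : ℝ → ℝ × ℝ} (hγ : ContDiff ℝ 1 γ) :
    μH[1] (γ '' (Icc 0 1 ∩ {t | deriv γ t = 0})) = 0 := by
  have hdc : Continuous (deriv γ) := hγ.continuous_deriv le_rfl
  have hdiff : Differentiable ℝ γ := hγ.differentiable one_ne_zero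
  set g : ℝ → ℝ := fun u => ‖deriv γ u‖ with hg
  have hgc : Continuous g := hdc.norm
  set v : ℝ → ℝ := fun t => ∫ u in (0:ℝ)..t, g u with hvdef
  have hv : ∀ t, HasDerivAt v (g t) t := fun t =>
    (hgc.integral_hasStrictDerivAt 0 t).hasDerivAt
  set K : Set ℝ := Icc 0 1 ∩ {t | deriv γ t = 0} with hK
  have hKm : MeasurableSet K :=
    measurableSet_Icc.inter (isClosed_eq hdc continuous_const).measurableSet
  have hdist : ∀ t ∈ K, ∀ u ∈ K, dist (γ t) (γ u) ≤ (1 : NNReal) * dist (v t) (v u) := by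
    intro t _ u _
    have h1 : ∫ x in u..t, deriv γ x = γ t - γ u :=
      intervalIntegral.integral_deriv_eq_sub (fun x _ => hdiff x) (hdc.intervalIntegrable u t)
    have h2 : ∫ x in u..t, g x = v t - v u := by
      rw [hvdef]
      simp only
      rw [← intervalIntegral.integral_interval_sub_left (hgc.intervalIntegrable 0 t)
        (hgc.intervalIntegrable 0 u)]
    rw [NNReal.coe_one, one_mul, dist_eq_norm, dist_eq_norm, ← h1, ← h2]
    calc ‖∫ x in u..t, deriv γ x‖ ≤ |∫ x in u..t, ‖deriv γ x‖| :=
          intervalIntegral.norm_integral_le_abs_integral_norm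
      _ = ‖∫ x in u..t, g x‖ := (Real.norm_eq_abs _).symm
  have h0 := factor_lemma hdist
  have h1 : μH[1] (v '' K) = volume (v '' K) := by
    rw [MeasureTheory.hausdorffMeasure_real]
  have h2 : volume (v '' K) ≤ ∫⁻ x in K,
      ENNReal.ofReal |((1 : ℝ →L[ℝ] ℝ).smulRight (g x)).det| := by
    exact MeasureTheory.addHaar_image_le_lintegral_abs_det_fderiv volume hKm
      (fun x _ => ((hv x).hasDerivWithinAt).hasFDerivWithinAt)
  have h3 : ∫⁻ x in K, ENNReal.ofReal |((1 : ℝ →L[ℝ] ℝ).smulRight (g x)).det| = 0 := by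
    have hz : ∀ᵐ x ∂volume, x ∈ K →
        ENNReal.ofReal |((1 : ℝ →L[ℝ] ℝ).smulRight (g x)).det| = (0 : ENNReal) := by
      refine Filter.Eventually.of_forall (fun x hx => ?_)
      have hx0 : deriv γ x = 0 := hx.2
      simp [ContinuousLinearMap.det_toSpanSingleton, hg, hx0]
    rw [MeasureTheory.setLIntegral_congr_fun_ae hKm hz, MeasureTheory.lintegral_zero]
  refine le_antisymm ?_ (by simp)
  calc μH[1] (γ '' K) ≤ (1 : NNReal) * μH[1] (v '' K) := h0
    _ = volume (v '' K) := by rw [h1]; simp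
    _ ≤ 0 := h2.trans (le_of_eq h3)

lemma delta_bound {a b a' b' : ℝ → ℝ} (ha : ∀ t, HasDerivAt a (a' t) t)
    (hb : ∀ t, HasDerivAt b (b' t) t) (hac : Continuous a') (hbc : Continuous b')
    {q₁ q₂ : ℝ} (hcond : ∀ u ∈ Icc q₁ q₂, |b' u| ≤ 3 * a' u) :
    ∀ t ∈ Icc q₁ q₂, ∀ s ∈ Icc q₁ q₂, |b s - b t| ≤ 3 * |a s - a t| := by
  have key : ∀ t ∈ Icc q₁ q₂, ∀ s ∈ Icc q₁ q₂, t ≤ s → |b s - b t| ≤ 3 * |a s - a t| := by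
    intro t ht s hs hts
    have hsub : Icc t s ⊆ Icc q₁ q₂ := Icc_subset_Icc ht.1 hs.2
    have hbint : ∫ u in t..s, b' u = b s - b t :=
      intervalIntegral.integral_eq_sub_of_hasDerivAt (fun u hu => hb u)
        (hbc.intervalIntegrable t s)
    have haint : ∫ u in t..s, a' u = a s - a t :=
      intervalIntegral.integral_eq_sub_of_hasDerivAt (fun u hu => ha u)
        (hac.intervalIntegrable t s)
    calc |b s - b t| = |∫ u in t..s, b' u| := by rw [hbint]
      _ ≤ ∫ u in t..s, |b' u| := intervalIntegral.abs_integral_le_integral_abs hts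
      _ ≤ ∫ u in t..s, 3 * a' u := by
          apply intervalIntegral.integral_mono_on hts
            (hbc.abs.intervalIntegrable t s) ((hac.const_smul (3:ℝ)).intervalIntegrable t s)
          intro u hu; exact hcond u (hsub hu)
      _ = 3 * (a s - a t) := by rw [intervalIntegral.integral_const_mul, haint]
      _ ≤ 3 * |a s - a t| := by
          have := le_abs_self (a s - a t); linarith
  intro t ht s hs
  rcases le_total t s with h | h
  · exact key t ht s hs h
  · rw [abs_sub_comm (b s), abs_sub_comm (a s)]
    exact key s hs t ht h

lemma piece_bound {γ : ℝ → ℝ × ℝ} {I : Set ℝ} {F : Set (ℝ × ℝ)} {π : ℝ × ℝ → ℝ}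
    (hF : F ⊆ γ '' I)
    (hprop : ∀ t ∈ I, ∀ s ∈ I, dist (γ s) (γ t) ≤ 3 * dist (π (γ s)) (π (γ t))) :
    μH[1] F ≤ 3 * volume (π '' F) := by
  set S : Set ℝ := I ∩ γ ⁻¹' F with hS
  have hFS : F = γ '' S := by
    apply Subset.antisymm
    · intro z hz
      obtain ⟨t, ht, rfl⟩ := hF hz
      exact ⟨t, ⟨ht, hz⟩, rfl⟩
    · rintro z ⟨t, ⟨ht, htF⟩, rfl⟩; exact htF
  have hdist : ∀ t ∈ S, ∀ u ∈ S, dist (γ t) (γ u) ≤ ((3 : NNReal) : ℝ) * dist ((π ∘ γ) t) ((π ∘ γ) u) := by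
    intro t ht u hu
    have := hprop u hu.1 t ht.1
    simpa using this
  have h0 := factor_lemma hdist
  have himg : (π ∘ γ) '' S = π '' F := by rw [hFS, image_comp]
  rw [himg, MeasureTheory.hausdorffMeasure_real] at h0
  rw [hFS]
  refine h0.trans (le_of_eq ?_)
  rw [← hFS]
  norm_num

lemma count_bound {ι : Type*} [Countable ι] {T : ι → Set ℝ} (hmeas : ∀ k, MeasurableSet (T k))
    (hsub : ∀ k, T k ⊆ Icc (-(1/2) : ℝ) (1/2)) {B : Set ℝ} (hB : B.Finite) {n : ℕ}
    (hcount : ∀ x ∉ B, ∀ s : Finset ι, (∀ k ∈ s, x ∈ T k) → s.card ≤ n) :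
    ∑' k, volume (T k) ≤ (n : ENNReal) := by
  classical
  have h1 : ∀ k, volume (T k) = ∫⁻ x, (T k).indicator 1 x :=
    fun k => (MeasureTheory.lintegral_indicator_one (hmeas k)).symm
  have h2 : ∑' k, volume (T k) = ∫⁻ x, ∑' k, (T k).indicator 1 x := by
    simp_rw [h1]
    exact (MeasureTheory.lintegral_tsum
      (fun k => (measurable_one.indicator (hmeas k)).aemeasurable)).symm
  rw [h2]
  have hpt : ∀ x ∉ B, ∑' k, (T k).indicator 1 x ≤
      (Icc (-(1/2) : ℝ) (1/2)).indicator (fun _ => (n : ENNReal)) x := by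
    intro x hx
    by_cases hxI : x ∈ Icc (-(1/2) : ℝ) (1/2)
    · rw [indicator_of_mem hxI]
      rw [ENNReal.tsum_eq_iSup_sum]
      refine iSup_le (fun s => ?_)
      have : ∑ k ∈ s, (T k).indicator (1 : ℝ → ENNReal) x
          = ∑ k ∈ s.filter (fun k => x ∈ T k), 1 := by
        rw [Finset.sum_filter]
        refine Finset.sum_congr rfl (fun k _ => ?_)
        by_cases h : x ∈ T k <;> simp [indicator_apply, h]
      rw [this, Finset.sum_const, nsmul_eq_mul, mul_one]
      have hc := hcount x hx (s.filter (fun k => x ∈ T k))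
        (fun k hk => (Finset.mem_filter.mp hk).2)
      exact_mod_cast Nat.cast_le.mpr hc
    · rw [indicator_of_notMem hxI]
      have : ∀ k, (T k).indicator (1 : ℝ → ENNReal) x = 0 := by
        intro k
        exact indicator_of_notMem (fun h => hxI (hsub k h)) _
      simp [this]
  have hae : ∀ᵐ x ∂volume, ∑' k, (T k).indicator 1 x ≤
      (Icc (-(1/2) : ℝ) (1/2)).indicator (fun _ => (n : ENNReal)) x := by
    have hBz : volume B = 0 := hB.measure_zero _
    filter_upwards [MeasureTheory.measure_eq_zero_iff_ae_notMem.mp hBz] with x hx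
    exact hpt x hx
  calc ∫⁻ x, ∑' k, (T k).indicator 1 x
      ≤ ∫⁻ x, (Icc (-(1/2) : ℝ) (1/2)).indicator (fun _ => (n : ENNReal)) x :=
        MeasureTheory.lintegral_mono_ae hae
    _ = n * volume (Icc (-(1/2) : ℝ) (1/2)) :=
        MeasureTheory.lintegral_indicator_const measurableSet_Icc _
    _ = n := by rw [Real.volume_Icc]; norm_num

open MvPolynomial in
lemma eval_on_fin0_injective :
    Function.Injective (MvPolynomial.eval (fun i : Fin 0 => i.elim0) :
      MvPolynomial (Fin 0) ℝ → ℝ) := by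
  intro x y hxy
  obtain ⟨a, rfl⟩ := MvPolynomial.C_surjective (Fin 0) x
  obtain ⟨b, rfl⟩ := MvPolynomial.C_surjective (Fin 0) y
  rw [MvPolynomial.eval_C, MvPolynomial.eval_C] at hxy
  rw [hxy]

open MvPolynomial in
lemma mv_fin1_finite_roots {c : MvPolynomial (Fin 1) ℝ} (hc : c ≠ 0) :
    {b : ℝ | MvPolynomial.eval (fun _ : Fin 1 => b) c = 0}.Finite := by
  set r : Polynomial ℝ :=
    Polynomial.map (MvPolynomial.eval (fun i : Fin 0 => i.elim0)) (finSuccEquiv ℝ 0 c) with hr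
  have hc2 : finSuccEquiv ℝ 0 c ≠ 0 := EmbeddingLike.map_ne_zero_iff.mpr hc
  have hrne : r ≠ 0 := fun h =>
    hc2 (Polynomial.map_injective _ eval_on_fin0_injective
      (h.trans (Polynomial.map_zero _).symm))
  have hsub : {b : ℝ | MvPolynomial.eval (fun _ : Fin 1 => b) c = 0} ⊆ {b | r.IsRoot b} := by
    intro b hb
    have he : (fun _ : Fin 1 => b) = Fin.cons b (fun i : Fin 0 => i.elim0) := by
      funext i
      fin_cases i
      rfl
    have := eval_eq_eval_mv_eval' (fun i : Fin 0 => i.elim0) b c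
    rw [← he] at this
    show Polynomial.eval b r = 0
    rw [hr, ← this]
    exact hb
  exact (Polynomial.finite_setOf_isRoot hrne).subset hsub

open MvPolynomial in
lemma poly_fiber {p : MvPolynomial (Fin 2) ℝ} (hp : p ≠ 0) {n : ℕ} (hdeg : p.degreeOf 0 ≤ n) :
    ∃ B : Set ℝ, B.Finite ∧ ∀ b ∉ B, ∃ R : Finset ℝ, R.card ≤ n ∧
      ∀ a : ℝ, MvPolynomial.eval ![a, b] p = 0 → a ∈ R := by
  classical
  set Q : Polynomial (MvPolynomial (Fin 1) ℝ) := finSuccEquiv ℝ 1 p with hQ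
  have hQne : Q ≠ 0 := EmbeddingLike.map_ne_zero_iff.mpr hp
  have hex : ∃ i, Q.coeff i ≠ 0 := by
    by_contra hco
    push_neg at hco
    exact hQne (Polynomial.ext fun i => by simp [hco i])
  obtain ⟨i, hi⟩ := hex
  refine ⟨{b : ℝ | MvPolynomial.eval (fun _ : Fin 1 => b) (Q.coeff i) = 0},
    mv_fin1_finite_roots hi, ?_⟩
  intro b hb
  set qb : Polynomial ℝ := Polynomial.map (MvPolynomial.eval (fun _ : Fin 1 => b)) Q with hqb
  have hqbne : qb ≠ 0 := by
    intro h
    apply hb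
    have : qb.coeff i = 0 := by rw [h]; simp
    rwa [hqb, Polynomial.coeff_map] at this
  have hdeg2 : qb.natDegree ≤ n := by
    calc qb.natDegree ≤ Q.natDegree := Polynomial.natDegree_map_le
      _ = p.degreeOf 0 := natDegree_finSuccEquiv p
      _ ≤ n := hdeg
  refine ⟨qb.roots.toFinset, ?_, ?_⟩
  · calc qb.roots.toFinset.card ≤ Multiset.card qb.roots := qb.roots.toFinset_card_le
      _ ≤ qb.natDegree := qb.card_roots'
      _ ≤ n := hdeg2
  · intro a ha
    have he : (![a, b] : Fin 2 → ℝ) = Fin.cons a (fun _ : Fin 1 => b) := by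
      funext j
      fin_cases j
      · rfl
      · rfl
    have := eval_eq_eval_mv_eval' (fun _ : Fin 1 => b) a p
    rw [← he] at this
    rw [Multiset.mem_toFinset, Polynomial.mem_roots hqbne]
    rw [ha] at this
    exact (Polynomial.IsRoot.def).mpr (by rw [← hqb] at this; exact this.symm)

open MvPolynomial in
lemma poly_fiber' {p : MvPolynomial (Fin 2) ℝ} (hp : p ≠ 0) {n : ℕ} (hdeg : p.degreeOf 1 ≤ n) :
    ∃ B : Set ℝ, B.Finite ∧ ∀ a ∉ B, ∃ R : Finset ℝ, R.card ≤ n ∧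
      ∀ b : ℝ, MvPolynomial.eval ![a, b] p = 0 → b ∈ R := by
  set p' := rename (Equiv.swap (0 : Fin 2) 1) p with hp'
  have hp'ne : p' ≠ 0 := fun h =>
    hp ((rename_injective _ (Equiv.swap 0 1).injective)
      (h.trans (map_zero (rename (R := ℝ) ⇑(Equiv.swap (0 : Fin 2) 1))).symm))
  have hdeg' : p'.degreeOf 0 ≤ n := by
    have h2 := degreeOf_rename_of_injective (p := p) (Equiv.swap (0 : Fin 2) 1).injective 1
    simp only [Equiv.swap_apply_right] at h2
    rw [hp', h2]
    exact hdeg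
  obtain ⟨B, hBfin, hB⟩ := poly_fiber hp'ne hdeg'
  refine ⟨B, hBfin, fun a ha => ?_⟩
  obtain ⟨R, hRcard, hR⟩ := hB a ha
  refine ⟨R, hRcard, fun b hb => ?_⟩
  apply hR b
  have hfe : (![b, a] ∘ ⇑(Equiv.swap (0 : Fin 2) 1)) = ![a, b] := by
    funext j; fin_cases j <;> simp
  rw [hp', eval_rename, hfe]
  exact hb

/-- A bivariate polynomial of degree at most `n` in each variable, not identically zero,
whose zero set in the square `[-1/2,1/2]^2` is a finite union of smooth (C¹) rectifiable
curves, has total nodal length (1-dimensional Hausdorff measure) at most `C·n`. -/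
theorem nodal_length_of_bivariate_polynomial :
    ∃ C : ℝ, 0 < C ∧ ∀ (n : ℕ) (p : MvPolynomial (Fin 2) ℝ), p ≠ 0 →
      (∀ i : Fin 2, p.degreeOf i ≤ n) →
      ∀ (m : ℕ) (γ : Fin m → ℝ → ℝ × ℝ), (∀ i, ContDiff ℝ 1 (γ i)) →
        ({x : ℝ × ℝ | MvPolynomial.eval ![x.1, x.2] p = 0} ∩
            Set.Icc ((-(1/2) : ℝ), (-(1/2) : ℝ)) ((1/2 : ℝ), (1/2 : ℝ)) =
          ⋃ i, γ i '' Set.Icc (0 : ℝ) 1) →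
        μH[1] ({x : ℝ × ℝ | MvPolynomial.eval ![x.1, x.2] p = 0} ∩
            Set.Icc ((-(1/2) : ℝ), (-(1/2) : ℝ)) ((1/2 : ℝ), (1/2 : ℝ)))
          ≤ ENNReal.ofReal (C * n) := by
  classical
  refine ⟨12, by norm_num, ?_⟩
  intro n p hp hdeg m γ hγ hZeq
  rw [hZeq]
  -- basic differentiability facts
  have hdiff : ∀ i, Differentiable ℝ (γ i) := fun i => (hγ i).differentiable one_ne_zero
  have hdc : ∀ i, Continuous (deriv (γ i)) := fun i => (hγ i).continuous_deriv le_rfl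
  have hcont : ∀ i, Continuous (γ i) := fun i => (hγ i).continuous
  have h1d : ∀ i t, HasDerivAt (fun u => (γ i u).1) ((deriv (γ i) t).1) t := fun i t =>
    ((ContinuousLinearMap.fst ℝ ℝ ℝ).hasFDerivAt).comp_hasDerivAt t ((hdiff i t).hasDerivAt)
  have h2d : ∀ i t, HasDerivAt (fun u => (γ i u).2) ((deriv (γ i) t).2) t := fun i t =>
    ((ContinuousLinearMap.snd ℝ ℝ ℝ).hasFDerivAt).comp_hasDerivAt t ((hdiff i t).hasDerivAt)
  have h1c : ∀ i, Continuous (fun t => (deriv (γ i) t).1) := fun i => continuous_fst.comp (hdc i)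
  have h2c : ∀ i, Continuous (fun t => (deriv (γ i) t).2) := fun i => continuous_snd.comp (hdc i)
  -- membership facts
  have hmem : ∀ i, ∀ t ∈ Icc (0:ℝ) 1,
      MvPolynomial.eval ![(γ i t).1, (γ i t).2] p = 0 ∧
      (γ i t).1 ∈ Icc (-(1/2) : ℝ) (1/2) ∧ (γ i t).2 ∈ Icc (-(1/2) : ℝ) (1/2) := by
    intro i t ht
    have hz : γ i t ∈ {x : ℝ × ℝ | MvPolynomial.eval ![x.1, x.2] p = 0} ∩
        Set.Icc ((-(1/2) : ℝ), (-(1/2) : ℝ)) ((1/2 : ℝ), (1/2 : ℝ)) := by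
      rw [hZeq]
      exact mem_iUnion.mpr ⟨i, mem_image_of_mem _ ht⟩
    obtain ⟨h0, hsq⟩ := hz
    exact ⟨h0, ⟨hsq.1.1, hsq.2.1⟩, ⟨hsq.1.2, hsq.2.2⟩⟩
  -- setup of pieces
  set proj : Fin 4 → (ℝ × ℝ → ℝ) := ![Prod.fst, Prod.fst, Prod.snd, Prod.snd] with hprojdef
  set oproj : Fin 4 → (ℝ × ℝ → ℝ) := ![Prod.snd, Prod.snd, Prod.fst, Prod.fst] with hoprojdef
  set sg : Fin 4 → ℝ := ![1, -1, 1, -1] with hsgdef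
  set cond : Fin 4 → Fin m → ℚ → ℚ → Prop := fun s i q₁ q₂ =>
    ∀ u ∈ Icc (q₁ : ℝ) (q₂ : ℝ),
      |oproj s (deriv (γ i) u)| ≤ 3 * (sg s * proj s (deriv (γ i) u)) with hconddef
  set E : (Fin 4 × Fin m × ℚ × ℚ) → Set (ℝ × ℝ) := fun k =>
    if cond k.1 k.2.1 k.2.2.1 k.2.2.2 then
      γ k.2.1 '' (Icc ((k.2.2.1 : ℝ)) ((k.2.2.2 : ℝ)) ∩ Icc 0 1) else ∅ with hEdef
  -- each piece is compact
  have hEcomp : ∀ k, IsCompact (E k) := by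
    intro k
    rw [hEdef]
    dsimp only
    split
    · exact ((isCompact_Icc.inter_right isClosed_Icc)).image (hcont _)
    · exact isCompact_empty
  have hEsub : ∀ k, E k ⊆ ⋃ i, γ i '' Icc (0:ℝ) 1 := by
    intro k z hz
    rw [hEdef] at hz
    dsimp only at hz
    split at hz
    · obtain ⟨t, ht, rfl⟩ := hz
      exact mem_iUnion.mpr ⟨k.2.1, mem_image_of_mem _ ht.2⟩
    · exact absurd hz (notMem_empty _)
  -- graph property of pieces
  have hEgraph : ∀ k, ∀ z ∈ E k, ∀ w ∈ E k,
      dist z w ≤ 3 * dist (proj k.1 z) (proj k.1 w) := by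
    rintro ⟨s, i, q₁, q₂⟩ z hz w hw
    by_cases hc : cond s i q₁ q₂
    swap
    · rw [hEdef] at hz
      dsimp only at hz
      rw [if_neg hc] at hz
      exact absurd hz (notMem_empty _)
    rw [hEdef] at hz hw
    dsimp only at hz hw
    rw [if_pos hc] at hz hw
    obtain ⟨t, ht, rfl⟩ := hz
    obtain ⟨u, hu, rfl⟩ := hw
    have ht' : t ∈ Icc (q₁:ℝ) q₂ := ht.1
    have hu' : u ∈ Icc (q₁:ℝ) q₂ := hu.1
    fin_cases s
    · -- s = 0 : |d2| ≤ 3 * d1, graph over x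
      have hc' : ∀ v ∈ Icc (q₁:ℝ) q₂,
          |(deriv (γ i) v).2| ≤ 3 * ((deriv (γ i) v).1) := by
        intro v hv
        have h3 : |(deriv (γ i) v).2| ≤ 3 * ((1:ℝ) * (deriv (γ i) v).1) := hc v hv
        rwa [one_mul] at h3
      have hd := delta_bound (h1d i) (h2d i) (h1c i) (h2c i) hc' t ht' u hu'
      show dist (γ i t) (γ i u) ≤ 3 * dist ((γ i t).1) ((γ i u).1)
      simp only [Prod.dist_eq, Real.dist_eq]
      apply max_le
      · have := abs_nonneg ((γ i t).1 - (γ i u).1); linarith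
      · rw [abs_sub_comm ((γ i t).2), abs_sub_comm ((γ i t).1)]; exact hd
    · -- s = 1 : |d2| ≤ 3 * (-d1), graph over x
      have hc' : ∀ v ∈ Icc (q₁:ℝ) q₂,
          |(deriv (γ i) v).2| ≤ 3 * (-(deriv (γ i) v).1) := by
        intro v hv
        have h3 : |(deriv (γ i) v).2| ≤ 3 * ((-1:ℝ) * (deriv (γ i) v).1) := hc v hv
        rwa [neg_one_mul] at h3
      have hd := delta_bound (fun x => (h1d i x).neg) (h2d i) (h1c i).neg (h2c i) hc'
        t ht' u hu'
      show dist (γ i t) (γ i u) ≤ 3 * dist ((γ i t).1) ((γ i u).1)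
      simp only [Prod.dist_eq, Real.dist_eq]
      apply max_le
      · have := abs_nonneg ((γ i t).1 - (γ i u).1); linarith
      · rw [abs_sub_comm ((γ i t).2)]
        simp only [Pi.neg_apply] at hd
        rw [show -(γ i u).1 - -(γ i t).1 = (γ i t).1 - (γ i u).1 by ring] at hd
        exact hd
    · -- s = 2 : |d1| ≤ 3 * d2, graph over y
      have hc' : ∀ v ∈ Icc (q₁:ℝ) q₂,
          |(deriv (γ i) v).1| ≤ 3 * ((deriv (γ i) v).2) := by
        intro v hv
        have h3 : |(deriv (γ i) v).1| ≤ 3 * ((1:ℝ) * (deriv (γ i) v).2) := hc v hv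
        rwa [one_mul] at h3
      have hd := delta_bound (h2d i) (h1d i) (h2c i) (h1c i) hc' t ht' u hu'
      show dist (γ i t) (γ i u) ≤ 3 * dist ((γ i t).2) ((γ i u).2)
      simp only [Prod.dist_eq, Real.dist_eq]
      apply max_le
      · rw [abs_sub_comm ((γ i t).1), abs_sub_comm ((γ i t).2)]; exact hd
      · have := abs_nonneg ((γ i t).2 - (γ i u).2); linarith
    · -- s = 3 : |d1| ≤ 3 * (-d2), graph over y
      have hc' : ∀ v ∈ Icc (q₁:ℝ) q₂,
          |(deriv (γ i) v).1| ≤ 3 * (-(deriv (γ i) v).2) := by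
        intro v hv
        have h3 : |(deriv (γ i) v).1| ≤ 3 * ((-1:ℝ) * (deriv (γ i) v).2) := hc v hv
        rwa [neg_one_mul] at h3
      have hd := delta_bound (fun x => (h2d i x).neg) (h1d i) (h2c i).neg (h1c i) hc'
        t ht' u hu'
      show dist (γ i t) (γ i u) ≤ 3 * dist ((γ i t).2) ((γ i u).2)
      simp only [Prod.dist_eq, Real.dist_eq]
      apply max_le
      · rw [abs_sub_comm ((γ i t).1)]
        simp only [Pi.neg_apply] at hd
        rw [show -(γ i u).2 - -(γ i t).2 = (γ i t).2 - (γ i u).2 by ring] at hd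
        exact hd
      · have := abs_nonneg ((γ i t).2 - (γ i u).2); linarith
  -- cover property
  have hoprojc : ∀ s : Fin 4, Continuous (oproj s) := by
    intro s
    fin_cases s
    exacts [continuous_snd, continuous_snd, continuous_fst, continuous_fst]
  have hprojc0 : ∀ s : Fin 4, Continuous (proj s) := by
    intro s
    fin_cases s
    exacts [continuous_fst, continuous_fst, continuous_snd, continuous_snd]
  have hcover : (⋃ i, γ i '' Icc (0:ℝ) 1) ⊆ (⋃ k, E k) ∪
      (⋃ i, γ i '' (Icc 0 1 ∩ {t | deriv (γ i) t = 0})) := by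
    intro z hz
    obtain ⟨i, hiz⟩ := mem_iUnion.mp hz
    obtain ⟨t, ht, rfl⟩ := hiz
    by_cases hd0 : deriv (γ i) t = 0
    · exact Or.inr (mem_iUnion.mpr ⟨i, mem_image_of_mem _ ⟨ht, hd0⟩⟩)
    · left
      have hex : ∃ s : Fin 4, |oproj s (deriv (γ i) t)| <
          3 * (sg s * proj s (deriv (γ i) t)) := by
        set d := deriv (γ i) t with hdd
        rcases le_total |d.2| |d.1| with hcmp | hcmp
        · have h1 : d.1 ≠ 0 := by
            intro h0
            apply hd0
            rw [h0] at hcmp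
            simp only [abs_zero] at hcmp
            have h2 : d.2 = 0 := abs_eq_zero.mp (le_antisymm hcmp (abs_nonneg _))
            exact Prod.ext h0 h2
          rcases lt_or_gt_of_ne h1 with hneg | hpos
          · refine ⟨1, ?_⟩
            show |d.2| < 3 * ((-1 : ℝ) * d.1)
            have habs : |d.1| = -d.1 := abs_of_neg hneg
            nlinarith [hcmp, habs]
          · refine ⟨0, ?_⟩
            show |d.2| < 3 * ((1 : ℝ) * d.1)
            have habs : |d.1| = d.1 := abs_of_pos hpos
            nlinarith [hcmp, habs]
        · have h2 : d.2 ≠ 0 := by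
            intro h0
            apply hd0
            rw [h0] at hcmp
            simp only [abs_zero] at hcmp
            have h1 : d.1 = 0 := abs_eq_zero.mp (le_antisymm hcmp (abs_nonneg _))
            exact Prod.ext h1 h0
          rcases lt_or_gt_of_ne h2 with hneg | hpos
          · refine ⟨3, ?_⟩
            show |d.1| < 3 * ((-1 : ℝ) * d.2)
            have habs : |d.2| = -d.2 := abs_of_neg hneg
            nlinarith [hcmp, habs]
          · refine ⟨2, ?_⟩
            show |d.1| < 3 * ((1 : ℝ) * d.2)
            have habs : |d.2| = d.2 := abs_of_pos hpos
            nlinarith [hcmp, habs]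
      obtain ⟨s, hs⟩ := hex
      have hopen : IsOpen {u : ℝ | |oproj s (deriv (γ i) u)| <
          3 * (sg s * proj s (deriv (γ i) u))} := by
        apply isOpen_lt
        · exact ((hoprojc s).comp (hdc i)).abs
        · exact continuous_const.mul (continuous_const.mul ((hprojc0 s).comp (hdc i)))
      obtain ⟨ε, hε, hball⟩ := Metric.isOpen_iff.mp hopen t hs
      obtain ⟨q₁, hq₁a, hq₁b⟩ := exists_rat_btwn (show t - ε < t by linarith)
      obtain ⟨q₂, hq₂a, hq₂b⟩ := exists_rat_btwn (show t < t + ε by linarith)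
      have hcnd : cond s i q₁ q₂ := by
        intro u hu
        have hub : u ∈ Metric.ball t ε := by
          rw [Metric.mem_ball, Real.dist_eq, abs_lt]
          constructor
          · have := hu.1; linarith
          · have := hu.2; linarith
        exact le_of_lt (hball hub)
      refine mem_iUnion.mpr ⟨(s, i, q₁, q₂), ?_⟩
      rw [hEdef]
      dsimp only
      rw [if_pos hcnd]
      exact mem_image_of_mem _ ⟨⟨le_of_lt hq₁b, le_of_lt hq₂a⟩, ht⟩
  -- disjointify
  set F : (Fin 4 × Fin m × ℚ × ℚ) → Set (ℝ × ℝ) := fun k =>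
    E k \ ⋃ j ∈ {j | Encodable.encode j < Encodable.encode k}, E j with hFdef
  have hltfin : ∀ k : Fin 4 × Fin m × ℚ × ℚ,
      {j : Fin 4 × Fin m × ℚ × ℚ | Encodable.encode j < Encodable.encode k}.Finite := by
    intro k
    apply Set.Finite.preimage (Set.injOn_of_injective Encodable.encode_injective)
      (Set.finite_Iio (Encodable.encode k))
  have hFmeas : ∀ k, MeasurableSet (F k) := by
    intro k
    exact ((hEcomp k).isClosed.measurableSet).diff
      ((hltfin k).measurableSet_biUnion (fun j _ => (hEcomp j).isClosed.measurableSet))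
  have hFsubE : ∀ k, F k ⊆ E k := fun k => diff_subset
  have hFdisj : ∀ j k, j ≠ k → ∀ z, z ∈ F j → z ∈ F k → False := by
    intro j k hjk z hzj hzk
    rcases lt_or_gt_of_ne (fun h => hjk (Encodable.encode_injective h) :
        Encodable.encode j ≠ Encodable.encode k) with h | h
    · exact hzk.2 (mem_biUnion h hzj.1)
    · exact hzj.2 (mem_biUnion h hzk.1)
  have hFcover : (⋃ k, E k) ⊆ ⋃ k, F k := by
    intro z hz
    have hS : (Encodable.encode '' {j : Fin 4 × Fin m × ℚ × ℚ | z ∈ E j}).Nonempty := by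
      obtain ⟨k, hk⟩ := mem_iUnion.mp hz
      exact ⟨Encodable.encode k, k, hk, rfl⟩
    obtain ⟨j₀, hj₀, hj₀enc⟩ := Nat.sInf_mem hS
    refine mem_iUnion.mpr ⟨j₀, hj₀, ?_⟩
    intro hmem2
    obtain ⟨j, hjlt, hjE⟩ := mem_iUnion₂.mp hmem2
    have hin : Encodable.encode j ∈ Encodable.encode ''
        {j' : Fin 4 × Fin m × ℚ × ℚ | z ∈ E j'} := ⟨j, hjE, rfl⟩
    have hle := Nat.sInf_le hin
    rw [← hj₀enc] at hle
    exact Nat.lt_le_asymm hjlt hle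
  -- projections of pieces
  set T : (Fin 4 × Fin m × ℚ × ℚ) → Set ℝ := fun k => proj k.1 '' F k with hTdef
  have hprojc : ∀ s : Fin 4, Continuous (proj s) := by
    intro s
    fin_cases s
    exacts [continuous_fst, continuous_fst, continuous_snd, continuous_snd]
  have hprojcases : ∀ (s : Fin 4) (z : ℝ × ℝ), proj s z = z.1 ∨ proj s z = z.2 := by
    intro s z
    fin_cases s
    exacts [Or.inl rfl, Or.inl rfl, Or.inr rfl, Or.inr rfl]
  have hTmeas : ∀ k, MeasurableSet (T k) := by
    intro k
    apply (hFmeas k).image_of_continuousOn_injOn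
    · exact (hprojc k.1).continuousOn
    · intro z hz w hw hzw
      have := hEgraph k z (hFsubE k hz) w (hFsubE k hw)
      rw [hzw] at this
      simp only [dist_self, mul_zero] at this
      exact dist_le_zero.mp this
  have hTsub : ∀ k, T k ⊆ Icc (-(1/2) : ℝ) (1/2) := by
    intro k x hx
    obtain ⟨z, hz, rfl⟩ := hx
    have h1 := hEsub k (hFsubE k hz)
    obtain ⟨i, hi⟩ := mem_iUnion.mp h1
    obtain ⟨t, ht, hzt⟩ := hi
    obtain ⟨_, hx1, hx2⟩ := hmem i t ht
    rw [← hzt]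
    rcases hprojcases k.1 (γ i t) with h | h <;> rw [h] <;> assumption
  -- per-piece measure bound
  have hFbound : ∀ k, μH[1] (F k) ≤ 3 * volume (T k) := by
    rintro ⟨s, i, q₁, q₂⟩
    by_cases hc : cond s i q₁ q₂
    · have hEeq : E (s, i, q₁, q₂) = γ i '' (Icc (q₁:ℝ) q₂ ∩ Icc 0 1) := by
        rw [hEdef]
        dsimp only
        rw [if_pos hc]
      have hsubE : F (s, i, q₁, q₂) ⊆ γ i '' (Icc (q₁:ℝ) q₂ ∩ Icc 0 1) := by
        intro z hz
        have h1 := hFsubE _ hz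
        rwa [hEeq] at h1
      have hmE : ∀ v ∈ Icc (q₁:ℝ) q₂ ∩ Icc 0 1, γ i v ∈ E (s, i, q₁, q₂) := by
        intro v hv
        rw [hEeq]
        exact mem_image_of_mem _ hv
      have hpp : ∀ t ∈ Icc (q₁:ℝ) q₂ ∩ Icc 0 1, ∀ u ∈ Icc (q₁:ℝ) q₂ ∩ Icc 0 1,
          dist (γ i u) (γ i t) ≤ 3 * dist (proj s (γ i u)) (proj s (γ i t)) := by
        intro t ht u hu
        exact hEgraph (s, i, q₁, q₂) _ (hmE u hu) _ (hmE t ht)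
      exact piece_bound hsubE hpp
    · have hFe : F (s, i, q₁, q₂) = ∅ := by
        apply eq_empty_of_subset_empty
        intro z hz
        have h1 := hFsubE _ hz
        rw [hEdef] at h1
        dsimp only at h1
        rwa [if_neg hc] at h1
      rw [hFe]
      simp
  -- counting bound
  -- a point of F k lies on the zero set
  have hFzero : ∀ k, ∀ z ∈ F k, MvPolynomial.eval ![z.1, z.2] p = 0 := by
    intro k z hz
    have h1 := hEsub k (hFsubE k hz)
    obtain ⟨i, hi⟩ := mem_iUnion.mp h1
    obtain ⟨t, ht, hzt⟩ := hi
    have := (hmem i t ht).1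
    rw [hzt] at this
    exact this
  have hprojuni : ∀ s : Fin 4, proj s = Prod.fst ∨ proj s = Prod.snd := by
    intro s
    fin_cases s
    exacts [Or.inl rfl, Or.inl rfl, Or.inr rfl, Or.inr rfl]
  have hTcount : ∀ s : Fin 4, ∑' (r : Fin m × ℚ × ℚ), volume (T (s, r)) ≤ (n : ENNReal) := by
    intro s
    rcases hprojuni s with hps | hps
    · -- graphs over the x-axis : count roots in y for fixed x
      obtain ⟨B, hBfin, hB⟩ := poly_fiber' hp (hdeg 1)
      apply count_bound (fun r => hTmeas (s, r)) (fun r => hTsub (s, r)) hBfin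
      intro x hx s' hs'
      obtain ⟨R, hRcard, hR⟩ := hB x hx
      set g : Fin m × ℚ × ℚ → ℝ × ℝ := fun r =>
        if h : ∃ z, z ∈ F (s, r) ∧ proj s z = x then h.choose else (0, 0) with hgdef
      have hgood : ∀ r ∈ s', g r ∈ F (s, r) ∧ proj s (g r) = x := by
        intro r hr
        have hxT := hs' r hr
        obtain ⟨z, hzF, hzx⟩ := hxT
        have hex : ∃ z, z ∈ F (s, r) ∧ proj s z = x := ⟨z, hzF, hzx⟩
        rw [hgdef]
        dsimp only
        rw [dif_pos hex]
        exact hex.choose_spec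
      refine le_trans (Finset.card_le_card_of_injOn (fun r => (g r).2) ?_ ?_) hRcard
      · intro r hr
        obtain ⟨hgF, hgx⟩ := hgood r hr
        have h0 := hFzero _ _ hgF
        rw [hps] at hgx
        rw [hgx] at h0
        exact hR _ h0
      · intro r₁ hr₁ r₂ hr₂ hf
        by_contra hne
        obtain ⟨h1F, h1x⟩ := hgood r₁ (by exact hr₁)
        obtain ⟨h2F, h2x⟩ := hgood r₂ (by exact hr₂)
        rw [hps] at h1x h2x
        have hzz : g r₁ = g r₂ := Prod.ext (h1x.trans h2x.symm) hf
        rw [hzz] at h1F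
        exact hFdisj (s, r₁) (s, r₂) (by simp [hne]) _ h1F h2F
    · -- graphs over the y-axis : count roots in x for fixed y
      obtain ⟨B, hBfin, hB⟩ := poly_fiber hp (hdeg 0)
      apply count_bound (fun r => hTmeas (s, r)) (fun r => hTsub (s, r)) hBfin
      intro x hx s' hs'
      obtain ⟨R, hRcard, hR⟩ := hB x hx
      set g : Fin m × ℚ × ℚ → ℝ × ℝ := fun r =>
        if h : ∃ z, z ∈ F (s, r) ∧ proj s z = x then h.choose else (0, 0) with hgdef
      have hgood : ∀ r ∈ s', g r ∈ F (s, r) ∧ proj s (g r) = x := by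
        intro r hr
        have hxT := hs' r hr
        obtain ⟨z, hzF, hzx⟩ := hxT
        have hex : ∃ z, z ∈ F (s, r) ∧ proj s z = x := ⟨z, hzF, hzx⟩
        rw [hgdef]
        dsimp only
        rw [dif_pos hex]
        exact hex.choose_spec
      refine le_trans (Finset.card_le_card_of_injOn (fun r => (g r).1) ?_ ?_) hRcard
      · intro r hr
        obtain ⟨hgF, hgx⟩ := hgood r hr
        have h0 := hFzero _ _ hgF
        rw [hps] at hgx
        rw [hgx] at h0
        exact hR _ h0
      · intro r₁ hr₁ r₂ hr₂ hf
        by_contra hne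
        obtain ⟨h1F, h1x⟩ := hgood r₁ (by exact hr₁)
        obtain ⟨h2F, h2x⟩ := hgood r₂ (by exact hr₂)
        rw [hps] at h1x h2x
        have hzz : g r₁ = g r₂ := Prod.ext hf (h1x.trans h2x.symm)
        rw [hzz] at h1F
        exact hFdisj (s, r₁) (s, r₂) (by simp [hne]) _ h1F h2F
  -- put everything together
  calc μH[1] (⋃ i, γ i '' Icc (0:ℝ) 1)
      ≤ μH[1] ((⋃ k, F k) ∪ (⋃ i, γ i '' (Icc 0 1 ∩ {t | deriv (γ i) t = 0}))) := by
        apply measure_mono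
        intro z hz
        rcases hcover hz with h | h
        · exact Or.inl (hFcover h)
        · exact Or.inr h
    _ ≤ μH[1] (⋃ k, F k) + μH[1] (⋃ i, γ i '' (Icc 0 1 ∩ {t | deriv (γ i) t = 0})) :=
        measure_union_le _ _
    _ = μH[1] (⋃ k, F k) := by
        rw [measure_iUnion_null fun i => null_lemma (hγ i), add_zero]
    _ ≤ ∑' k, μH[1] (F k) := measure_iUnion_le _
    _ ≤ ∑' k, 3 * volume (T k) := ENNReal.tsum_le_tsum hFbound
    _ = 3 * ∑' k, volume (T k) := ENNReal.tsum_mul_left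
    _ = 3 * ∑' (s : Fin 4) (r : Fin m × ℚ × ℚ), volume (T (s, r)) := by
        rw [ENNReal.tsum_prod']
    _ ≤ 3 * ∑' (_s : Fin 4), (n : ENNReal) := by
        gcongr
        exact hTcount _
    _ = 12 * n := by
        rw [tsum_fintype]
        simp only [Finset.sum_const, Finset.card_univ, Fintype.card_fin, nsmul_eq_mul]
        ring
    _ ≤ ENNReal.ofReal (12 * n) := by
        rw [show (12 : ℝ) * n = ((12 * n : ℕ) : ℝ) by push_cast; ring, ENNReal.ofReal_natCast]
        push_cast
        ring_nf
        exact le_refl _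
end

section
/- Let g ∈ C¹(B(2W)) with b := inf_{B(2W)} (|g| + |∇g|) > 0, and let t < b/2. Then distinct connected components of the sublevel set {x ∈ B(2W) : |g(x)| ≤ t} are disjoint and, for t sufficiently small depending on b and the modulus of continuity of g, each connected component of {|g| ≤ t} that is contained in B(W) contains at least one connected component of the zero set {g = 0}. -/
open Metric

noncomputable section

/-- The plane `ℝ²`. -/
abbrev E2 : Type := EuclideanSpace ℝ (Fin 2)

/-- The gradient of `g` on the closed ball `B(0,2W)`, as a vector of `ℝ²`. -/
def gradOn (W : ℝ) (g : E2 → ℝ) (x : E2) : E2 :=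
  (InnerProductSpace.toDual ℝ E2).symm (fderivWithin ℝ g (closedBall (0 : E2) (2 * W)) x)

set_option maxHeartbeats 1000000 in
open Set in
lemma exists_zero_in_component (W b t : ℝ) (hW : 0 < W) (hb : 0 < b) (g : E2 → ℝ)
    (hg : ContDiffOn ℝ 1 g (closedBall (0 : E2) (2 * W)))
    (hlow : ∀ x ∈ closedBall (0 : E2) (2 * W), b ≤ |g x| + ‖gradOn W g x‖)
    (ht : 0 < t) (htb : t < b / 2)
    (x₀ : E2) (hx₀ : x₀ ∈ {y ∈ closedBall (0 : E2) (2 * W) | |g y| ≤ t})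
    (hTW : connectedComponentIn {y ∈ closedBall (0 : E2) (2 * W) | |g y| ≤ t} x₀ ⊆
      closedBall (0 : E2) W) :
    ∃ x ∈ connectedComponentIn {y ∈ closedBall (0 : E2) (2 * W) | |g y| ≤ t} x₀, g x = 0 := by
  set S : Set E2 := {y ∈ closedBall (0 : E2) (2 * W) | |g y| ≤ t} with hSdef
  set T : Set E2 := connectedComponentIn S x₀ with hTdef
  have hgc : ContinuousOn g (closedBall (0 : E2) (2 * W)) := hg.continuousOn
  have hS : IsClosed S := by
    have : S = closedBall (0 : E2) (2 * W) ∩ (fun y => |g y|) ⁻¹' Set.Iic t := by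
      ext y; simp [hSdef, Set.mem_sep_iff]
    rw [this]
    exact hgc.abs.preimage_isClosed_of_isClosed Metric.isClosed_closedBall isClosed_Iic
  have hTS : T ⊆ S := connectedComponentIn_subset S x₀
  have hx₀T : x₀ ∈ T := mem_connectedComponentIn hx₀
  have hTpre : IsPreconnected T := isPreconnected_connectedComponentIn
  have hTclosed : IsClosed T := by
    apply isClosed_of_closure_subset
    exact hTpre.closure.subset_connectedComponentIn (subset_closure hx₀T)
      (closure_minimal hTS hS)
  have hTcomp : IsCompact T :=
    (isCompact_closedBall (0 : E2) W).of_isClosed_subset hTclosed hTW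
  have hTsub2 : T ⊆ closedBall (0 : E2) (2 * W) := fun y hy => (hTS hy).1
  obtain ⟨xm, hxmT, hmin⟩ :=
    hTcomp.exists_isMinOn ⟨x₀, hx₀T⟩ ((hgc.mono hTsub2).abs)
  by_contra hno
  push_neg at hno
  set m : ℝ := |g xm| with hmdef
  have hm : 0 < m := abs_pos.mpr (hno _ hxmT)
  have hmt : m ≤ t := (hTS hxmT).2
  have hW2 : W < 2 * W := by linarith
  have hxW : ‖xm‖ ≤ W := mem_closedBall_zero_iff.mp (hTW hxmT)
  have hxU : xm ∈ ball (0 : E2) (2 * W) := mem_ball_zero_iff.mpr (lt_of_le_of_lt hxW hW2)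
  have hgU : ContDiffOn ℝ 1 g (ball (0 : E2) (2 * W)) := hg.mono ball_subset_closedBall
  have hdiff : ∀ z ∈ ball (0 : E2) (2 * W), DifferentiableAt ℝ g z := fun z hz =>
    (hgU.differentiableOn one_ne_zero).differentiableAt (isOpen_ball.mem_nhds hz)
  have hfc : ContinuousOn (fderiv ℝ g) (ball (0 : E2) (2 * W)) :=
    hgU.continuousOn_fderiv_of_isOpen isOpen_ball le_rfl
  set L : E2 →L[ℝ] ℝ := fderiv ℝ g xm with hLdef
  set v : E2 := (InnerProductSpace.toDual ℝ E2).symm L with hvdef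
  have hLv : L v = ‖v‖ ^ 2 := by
    rw [← InnerProductSpace.toDual_symm_apply (𝕜 := ℝ) (y := L) (x := v)]
    exact real_inner_self_eq_norm_sq v
  have hgrad_eq : ∀ z ∈ ball (0 : E2) (2 * W),
      gradOn W g z = (InnerProductSpace.toDual ℝ E2).symm (fderiv ℝ g z) := by
    intro z hz
    unfold gradOn
    rw [fderivWithin_of_mem_nhds
      (Filter.mem_of_superset (isOpen_ball.mem_nhds hz) ball_subset_closedBall)]
  have hv : b / 2 < ‖v‖ := by
    have h1 := hlow xm (ball_subset_closedBall hxU)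
    rw [hgrad_eq xm hxU] at h1
    rw [← hLdef, ← hvdef] at h1
    have : m < b / 2 := lt_of_le_of_lt hmt htb
    linarith
  have hv0 : 0 < ‖v‖ := lt_trans (by linarith) hv
  set σ : ℝ := if 0 < g xm then (1 : ℝ) else -1 with hσdef
  have hσg : σ * g xm = m := by
    rw [hσdef, hmdef]
    split_ifs with h
    · rw [one_mul, abs_of_pos h]
    · have hlt : g xm < 0 := lt_of_le_of_ne (not_lt.mp h) (hno _ hxmT)
      rw [abs_of_neg hlt]; ring
  have hσabs : |σ| = 1 := by rw [hσdef]; split_ifs <;> simp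
  have hfca : ContinuousAt (fderiv ℝ g) xm := hfc.continuousAt (isOpen_ball.mem_nhds hxU)
  obtain ⟨δ, hδ, hδ'⟩ := Metric.continuousAt_iff.mp hfca (‖v‖ / 2) (by positivity)
  set ε : ℝ := min (δ / (2 * ‖v‖)) (min (W / (2 * ‖v‖)) ((2 * t) / (3 * ‖v‖ ^ 2))) with hεdef
  have hε : 0 < ε := by
    apply lt_min (by positivity) (lt_min (by positivity) (by positivity))
  have hε1 : ε * ‖v‖ < δ := by
    have h1 : ε ≤ δ / (2 * ‖v‖) := min_le_left _ _
    have h2 : δ / (2 * ‖v‖) * ‖v‖ = δ / 2 := by field_simp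
    have h3 := mul_le_mul_of_nonneg_right h1 hv0.le
    rw [h2] at h3
    linarith
  have hε2 : ε * ‖v‖ ≤ W / 2 := by
    have h1 : ε ≤ W / (2 * ‖v‖) := le_trans (min_le_right _ _) (min_le_left _ _)
    have h2 : W / (2 * ‖v‖) * ‖v‖ = W / 2 := by field_simp
    have h3 := mul_le_mul_of_nonneg_right h1 hv0.le
    rw [h2] at h3
    linarith
  have hε3 : ε * (3 / 2 * ‖v‖ ^ 2) ≤ t := by
    have h1 : ε ≤ (2 * t) / (3 * ‖v‖ ^ 2) := le_trans (min_le_right _ _) (min_le_right _ _)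
    have h2 : (2 * t) / (3 * ‖v‖ ^ 2) * (3 / 2 * ‖v‖ ^ 2) = t := by
      field_simp
    have h3 := mul_le_mul_of_nonneg_right h1 (by positivity : (0:ℝ) ≤ 3 / 2 * ‖v‖ ^ 2)
    rw [h2] at h3
    exact h3
  set w : E2 := -(σ • v) with hwdef
  have hwn : ‖w‖ = ‖v‖ := by
    rw [hwdef, norm_neg, norm_smul, Real.norm_eq_abs, hσabs, one_mul]
  set p : ℝ → E2 := fun s => xm + s • w with hpdef
  set φ : ℝ → ℝ := fun s => σ * g (p s) with hφdef
  have hφ0 : φ 0 = m := by simp [hφdef, hpdef, hσg]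
  have hpm : ∀ s ∈ Set.Icc (0:ℝ) ε,
      p s ∈ ball (0 : E2) (2 * W) ∧ dist (p s) xm < δ := by
    intro s hs
    have hsn : ‖s • w‖ = s * ‖v‖ := by
      rw [norm_smul, Real.norm_eq_abs, abs_of_nonneg hs.1, hwn]
    have hsw : s * ‖v‖ ≤ ε * ‖v‖ := mul_le_mul_of_nonneg_right hs.2 hv0.le
    constructor
    · rw [mem_ball_zero_iff]
      calc ‖xm + s • w‖ ≤ ‖xm‖ + ‖s • w‖ := norm_add_le _ _
        _ ≤ W + W / 2 := by rw [hsn]; exact add_le_add hxW (le_trans hsw hε2)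
        _ < 2 * W := by linarith
    · rw [hpdef]
      simp only [dist_eq_norm, add_sub_cancel_left]
      rw [hsn]
      exact lt_of_le_of_lt hsw hε1
  have hφderiv : ∀ s ∈ Set.Icc (0:ℝ) ε, HasDerivAt φ (-((fderiv ℝ g (p s)) v)) s := by
    intro s hs
    have h1 : HasDerivAt p w s := by
      have h0 : HasDerivAt (fun u : ℝ => u • w) ((1:ℝ) • w) s := (hasDerivAt_id s).smul_const w
      have := h0.const_add xm
      simpa [hpdef] using this
    have h2 := ((hdiff (p s) (hpm s hs).1).hasFDerivAt).comp_hasDerivAt s h1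
    have h3 := h2.const_mul σ
    have hval : σ * ((fderiv ℝ g (p s)) w) = -((fderiv ℝ g (p s)) v) := by
      rw [hwdef, map_neg, map_smul, smul_eq_mul, hσdef]
      split_ifs <;> ring
    rw [← hval]
    exact h3
  have hDbound : ∀ s ∈ Set.Icc (0:ℝ) ε,
      ‖v‖ ^ 2 / 2 ≤ (fderiv ℝ g (p s)) v ∧ (fderiv ℝ g (p s)) v ≤ 3 / 2 * ‖v‖ ^ 2 := by
    intro s hs
    have hd := hδ' (hpm s hs).2
    have hdn : ‖fderiv ℝ g (p s) - L‖ < ‖v‖ / 2 := by rwa [dist_eq_norm] at hd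
    have h1 : |(fderiv ℝ g (p s) - L) v| ≤ ‖fderiv ℝ g (p s) - L‖ * ‖v‖ := by
      rw [← Real.norm_eq_abs]
      exact (fderiv ℝ g (p s) - L).le_opNorm v
    have h2 : |(fderiv ℝ g (p s) - L) v| ≤ ‖v‖ / 2 * ‖v‖ :=
      le_trans h1 (mul_le_mul_of_nonneg_right hdn.le hv0.le)
    have h3 : (fderiv ℝ g (p s)) v = L v + (fderiv ℝ g (p s) - L) v := by
      simp
    rw [h3, hLv]
    obtain ⟨h4, h5⟩ := abs_le.mp h2
    constructor <;> nlinarith [sq_nonneg ‖v‖]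
  have hφcont : ContinuousOn φ (Set.Icc 0 ε) := fun s hs =>
    (hφderiv s hs).continuousAt.continuousWithinAt
  have hbound : ∀ s ∈ Set.Icc (0:ℝ) ε, φ s ≤ m ∧ m - t ≤ φ s ∧ (0 < s → φ s < m) := by
    intro s hs
    rcases eq_or_lt_of_le hs.1 with h0 | h0
    · rw [← h0, hφ0]
      exact ⟨le_rfl, by linarith, fun h => absurd h (lt_irrefl 0)⟩
    · have hsc : ContinuousOn φ (Set.Icc 0 s) := hφcont.mono (Set.Icc_subset_Icc_right hs.2)
      obtain ⟨c, hc, hslope⟩ := exists_hasDerivAt_eq_slope φ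
        (fun u => -((fderiv ℝ g (p u)) v)) h0 hsc
        (fun u hu => hφderiv u ⟨hu.1.le, hu.2.le.trans hs.2⟩)
      have hc' : c ∈ Set.Icc (0:ℝ) ε := ⟨hc.1.le, hc.2.le.trans hs.2⟩
      obtain ⟨hB1, hB2⟩ := hDbound c hc'
      rw [sub_zero] at hslope
      have heq : φ s - m = -((fderiv ℝ g (p c)) v) * s := by
        rw [← hφ0]
        field_simp at hslope
        linarith [hslope]
      have hs0 : (0:ℝ) < s := h0
      have hDpos : 0 < (fderiv ℝ g (p c)) v :=
        lt_of_lt_of_le (by positivity) hB1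
      have hprod : 0 < (fderiv ℝ g (p c)) v * s := mul_pos hDpos hs0
      have h1 : (fderiv ℝ g (p c)) v * s ≤ 3 / 2 * ‖v‖ ^ 2 * s :=
        mul_le_mul_of_nonneg_right hB2 hs0.le
      have h2 : 3 / 2 * ‖v‖ ^ 2 * s ≤ 3 / 2 * ‖v‖ ^ 2 * ε :=
        mul_le_mul_of_nonneg_left hs.2 (by positivity)
      exact ⟨by linarith, by linarith, fun _ => by linarith⟩
  have hpS : ∀ s ∈ Set.Icc (0:ℝ) ε, p s ∈ S := by
    intro s hs
    refine ⟨ball_subset_closedBall (hpm s hs).1, ?_⟩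
    obtain ⟨hb1, hb2, _⟩ := hbound s hs
    have habs : |g (p s)| = |φ s| := by
      rw [hφdef]; simp only []
      rw [abs_mul, hσabs, one_mul]
    rw [habs]
    rw [abs_le]
    constructor <;> linarith
  have hKT : ∀ s ∈ Set.Icc (0:ℝ) ε, p s ∈ T := by
    have hpc : Continuous p := by
      rw [hpdef]; exact continuous_const.add (continuous_id.smul continuous_const)
    have hK : IsPreconnected (p '' Set.Icc 0 ε) :=
      isPreconnected_Icc.image p hpc.continuousOn
    have hxK : xm ∈ p '' Set.Icc 0 ε := ⟨0, ⟨le_rfl, hε.le⟩, by simp [hpdef]⟩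
    have hsub : p '' Set.Icc 0 ε ⊆ S := by
      rintro y ⟨s, hs, rfl⟩; exact hpS s hs
    have h := hK.subset_connectedComponentIn hxK hsub
    have h2 : p '' Set.Icc 0 ε ⊆ T := by
      rw [hTdef, connectedComponentIn_eq hxmT]; exact h
    intro s hs; exact h2 ⟨s, hs, rfl⟩
  have hφε : φ ε < m := (hbound ε ⟨hε.le, le_rfl⟩).2.2 hε
  rcases le_or_gt (φ ε) 0 with hle | hpos
  · have h0mem : (0:ℝ) ∈ Set.Icc (φ ε) (φ 0) := ⟨hle, by rw [hφ0]; exact hm.le⟩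
    obtain ⟨s, hs, hφs⟩ := intermediate_value_Icc' hε.le hφcont h0mem
    have hgz : g (p s) = 0 := by
      have : σ * g (p s) = 0 := hφs
      rcases mul_eq_zero.mp this with h | h
      · exfalso; rw [hσdef] at h; revert h; split_ifs <;> norm_num
      · exact h
    exact hno (p s) (hKT s hs) hgz
  · have h1 : |g (p ε)| = φ ε := by
      have : |φ ε| = φ ε := abs_of_pos hpos
      rw [← this, hφdef]
      simp only []
      rw [abs_mul, hσabs, one_mul]
    have h2 := isMinOn_iff.mp hmin (p ε) (hKT ε ⟨hε.le, le_rfl⟩)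
    rw [h1] at h2
    linarith

/-- If `g ∈ C¹(B(0,2W))` with `|g| + |∇g| ≥ b > 0` on `B(0,2W)`, then for `t < b/2`
distinct connected components of the sublevel set `{|g| ≤ t}` are disjoint, and for `t`
sufficiently small every connected component of `{|g| ≤ t}` contained in `B(0,W)`
contains a connected component of the zero set `{g = 0}`. -/
theorem sublevel_components (W b : ℝ) (hW : 0 < W) (hb : 0 < b) (g : E2 → ℝ)
    (hg : ContDiffOn ℝ 1 g (closedBall (0 : E2) (2 * W)))
    (hlow : ∀ x ∈ closedBall (0 : E2) (2 * W), b ≤ |g x| + ‖gradOn W g x‖) :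
    (∀ t : ℝ, t < b / 2 →
      ∀ T₁ T₂ : Set E2,
        (∃ x ∈ {y ∈ closedBall (0 : E2) (2 * W) | |g y| ≤ t},
          T₁ = connectedComponentIn {y ∈ closedBall (0 : E2) (2 * W) | |g y| ≤ t} x) →
        (∃ x ∈ {y ∈ closedBall (0 : E2) (2 * W) | |g y| ≤ t},
          T₂ = connectedComponentIn {y ∈ closedBall (0 : E2) (2 * W) | |g y| ≤ t} x) →
        T₁ ≠ T₂ → Disjoint T₁ T₂) ∧
    (∃ t₀ : ℝ, 0 < t₀ ∧ ∀ t : ℝ, 0 < t → t < t₀ → t < b / 2 →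
      ∀ T : Set E2,
        (∃ x ∈ {y ∈ closedBall (0 : E2) (2 * W) | |g y| ≤ t},
          T = connectedComponentIn {y ∈ closedBall (0 : E2) (2 * W) | |g y| ≤ t} x) →
        T ⊆ closedBall (0 : E2) W →
        ∃ x ∈ T, g x = 0 ∧
          connectedComponentIn {y ∈ closedBall (0 : E2) (2 * W) | g y = 0} x ⊆ T) := by
  constructor
  · rintro t _ T₁ T₂ ⟨x₁, hx₁, rfl⟩ ⟨x₂, hx₂, rfl⟩ hne
    rw [Set.disjoint_left]
    intro z hz1 hz2
    exact hne ((connectedComponentIn_eq hz1).trans (connectedComponentIn_eq hz2).symm)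
  · refine ⟨b, hb, ?_⟩
    intro t ht _ htb T ⟨x₀, hx₀, hT⟩ hTW
    obtain ⟨x, hxT, hgx⟩ := exists_zero_in_component W b t hW hb g hg hlow ht htb x₀ hx₀
      (hT ▸ hTW)
    refine ⟨x, hT ▸ hxT, hgx, ?_⟩
    have hZS : {y ∈ closedBall (0 : E2) (2 * W) | g y = 0} ⊆
        {y ∈ closedBall (0 : E2) (2 * W) | |g y| ≤ t} := by
      intro y hy
      exact ⟨hy.1, by rw [hy.2]; simpa using ht.le⟩
    refine subset_trans (connectedComponentIn_mono x hZS) ?_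
    rw [hT]
    rw [connectedComponentIn_eq hxT]
end
end
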